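/- Suppose the merit function G(z) = L(x) + δ_X(z) + δ_{{z : g(z) ≤ 0}}(z) + Σⱼ δ_{{z : hⱼ(z) ≤ 0}}(z) satisfies: (a) G(z^{k+1}) ≤ G(z^k) - (β/2)‖z^{k+1} - z^k‖² for all k; (b) dist(0, ∂G(z^k)) ≤ C‖z^{k-1} - z^k‖ for some constant C > 0; (c) G satisfies the Kurdyka–Łojasiewicz property and {z^k} is bounded. Then {z^k} converges to a point z* with 0 ∈ ∂G(z*), and Σ_k ‖z^{k+1} - z^k‖ < ∞. -/

import Mathlib

open scoped BigOperators Classical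
open Filter

/-- Indicator function of a set, with values in the extended reals. -/
noncomputable def indE {Z : Type*} (S : Set Z) (z : Z) : EReal :=
  if z ∈ S then 0 else ⊤

/-- Fréchet (regular) subdifferential of an extended-real-valued function. -/
def frechetSubdiffE {Z : Type*} [NormedAddCommGroup Z] [NormedSpace ℝ Z]
    (f : Z → EReal) (x : Z) : Set (Z →L[ℝ] ℝ) :=
  {v | f x ≠ ⊤ ∧ f x ≠ ⊥ ∧
    ∀ ε > (0 : ℝ), ∀ᶠ y in nhds x,
      f x + ((v (y - x) - ε * ‖y - x‖ : ℝ) : EReal) ≤ f y}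

/-- Limiting (Mordukhovich) subdifferential of an extended-real-valued function. -/
def limitingSubdiffE {Z : Type*} [NormedAddCommGroup Z] [NormedSpace ℝ Z]
    (f : Z → EReal) (x : Z) : Set (Z →L[ℝ] ℝ) :=
  {v | ∃ (xs : ℕ → Z) (vs : ℕ → Z →L[ℝ] ℝ),
    Tendsto xs atTop (nhds x) ∧ Tendsto (fun k => f (xs k)) atTop (nhds (f x)) ∧
    Tendsto vs atTop (nhds v) ∧ ∀ k, vs k ∈ frechetSubdiffE f (xs k)}

/-- The Kurdyka–Łojasiewicz property of `f` at a point `x`. -/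
def KLPropertyAt {Z : Type*} [NormedAddCommGroup Z] [NormedSpace ℝ Z]
    (f : Z → EReal) (x : Z) : Prop :=
  ∃ η : ℝ, 0 < η ∧ ∃ U ∈ nhds x, ∃ φ : ℝ → ℝ,
    φ 0 = 0 ∧ ContinuousOn φ (Set.Ico 0 η) ∧ ConcaveOn ℝ (Set.Ico 0 η) φ ∧
    DifferentiableOn ℝ φ (Set.Ioo 0 η) ∧ (∀ s ∈ Set.Ioo (0 : ℝ) η, 0 < deriv φ s) ∧
    ∀ y ∈ U, f x < f y → f y < f x + (η : EReal) →
      ∀ v ∈ limitingSubdiffE f y, 1 ≤ deriv φ ((f y - f x).toReal) * ‖v‖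

/-- The variable space `z = (x, λ, r, ρ)`. -/
abbrev Zsp (n τ : ℕ) : Type :=
  (Fin n → ℝ) × (Fin τ → ℝ) × (Fin τ → ℝ) × (Fin τ → Fin n → ℝ)

/-- The merit function `G(z) = L(x) + δ_X(z) + δ_{g ≤ 0}(z) + Σⱼ δ_{hⱼ ≤ 0}(z)`. -/
noncomputable def Gmerit {n τ : ℕ} (L : (Fin n → ℝ) → ℝ) (X : Set (Zsp n τ))
    (g : Zsp n τ → ℝ) (h : Fin τ → Zsp n τ → ℝ) (z : Zsp n τ) : EReal :=
  ((L z.1 : ℝ) : EReal) + indE X z + indE {z' | g z' ≤ 0} z +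
    ∑ j, indE {z' | h j z' ≤ 0} z

-- AUX
lemma indE_of_mem {Z : Type*} {S : Set Z} {z : Z} (hz : z ∈ S) : indE S z = 0 := if_pos hz

lemma indE_of_not_mem {Z : Type*} {S : Set Z} {z : Z} (hz : z ∉ S) : indE S z = ⊤ := if_neg hz

lemma indE_nonneg {Z : Type*} (S : Set Z) (z : Z) : (0 : EReal) ≤ indE S z := by
  unfold indE; split_ifs <;> simp

lemma indE_ne_bot {Z : Type*} (S : Set Z) (z : Z) : indE S z ≠ ⊥ := by
  unfold indE; split_ifs <;> simp

section GmeritAux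
variable {n τ : ℕ} {L : (Fin n → ℝ) → ℝ} {X : Set (Zsp n τ)} {g : Zsp n τ → ℝ}
  {h : Fin τ → Zsp n τ → ℝ}

lemma sum_indE_ne_bot (z : Zsp n τ) : (∑ j, indE {z' | h j z' ≤ 0} z) ≠ ⊥ := by
  have h0 : (0 : EReal) ≤ ∑ j, indE {z' | h j z' ≤ 0} z :=
    Finset.sum_nonneg fun j _ => indE_nonneg _ _
  intro hb
  rw [hb] at h0
  simp at h0

lemma Gmerit_of_mem {z : Zsp n τ} (hz : z ∈ X) (hgz : g z ≤ 0) (hhz : ∀ j, h j z ≤ 0) :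
    Gmerit L X g h z = ((L z.1 : ℝ) : EReal) := by
  unfold Gmerit
  rw [indE_of_mem hz, indE_of_mem (show z ∈ {z' | g z' ≤ 0} from hgz),
    Finset.sum_eq_zero (fun j _ => indE_of_mem (show z ∈ {z' | h j z' ≤ 0} from hhz j))]
  simp

lemma mem_of_Gmerit_ne_top {z : Zsp n τ} (hz : Gmerit L X g h z ≠ ⊤) :
    z ∈ X ∧ g z ≤ 0 ∧ ∀ j, h j z ≤ 0 := by
  by_cases h1 : z ∈ X
  · by_cases h2 : g z ≤ 0
    · by_cases h3 : ∀ j, h j z ≤ 0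
      · exact ⟨h1, h2, h3⟩
      · exfalso; apply hz
        push_neg at h3
        obtain ⟨j, hj⟩ := h3
        have hsum : (∑ j, indE {z' | h j z' ≤ 0} z) = ⊤ := by
          refine top_le_iff.mp ?_
          calc (⊤ : EReal) = indE {z' | h j z' ≤ 0} z := by
                rw [indE_of_not_mem (show z ∉ {z' | h j z' ≤ 0} from not_le.mpr hj)]
            _ ≤ _ := Finset.single_le_sum (f := fun i => indE {z' | h i z' ≤ 0} z)
                  (fun i _ => indE_nonneg _ _) (Finset.mem_univ j)
        unfold Gmerit
        rw [hsum]
        refine EReal.add_top_of_ne_bot ?_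
        rw [Ne, EReal.add_eq_bot_iff, EReal.add_eq_bot_iff]
        push_neg
        exact ⟨⟨EReal.coe_ne_bot _, indE_ne_bot _ _⟩, indE_ne_bot _ _⟩
    · exfalso; apply hz
      unfold Gmerit
      rw [indE_of_not_mem (show z ∉ {z' | g z' ≤ 0} from h2),
        EReal.add_top_of_ne_bot (by
          rw [Ne, EReal.add_eq_bot_iff]; push_neg
          exact ⟨EReal.coe_ne_bot _, indE_ne_bot _ _⟩),
        EReal.top_add_of_ne_bot (sum_indE_ne_bot z)]
  · exfalso; apply hz
    unfold Gmerit
    rw [indE_of_not_mem h1, EReal.add_top_of_ne_bot (EReal.coe_ne_bot _),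
      EReal.top_add_of_ne_bot (indE_ne_bot _ _),
      EReal.top_add_of_ne_bot (sum_indE_ne_bot z)]

lemma Gmerit_eq_of_subdiff (hL : Continuous L) {y : Zsp n τ} {v : Zsp n τ →L[ℝ] ℝ}
    (hv : v ∈ limitingSubdiffE (Gmerit L X g h) y) :
    Gmerit L X g h y = ((L y.1 : ℝ) : EReal) := by
  obtain ⟨xs, vs, hxs, hfs, -, hfre⟩ := hv
  have h1 : ∀ k, Gmerit L X g h (xs k) = ((L (xs k).1 : ℝ) : EReal) := fun k => by
    obtain ⟨ha, hb, hc⟩ := mem_of_Gmerit_ne_top (hfre k).1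
    exact Gmerit_of_mem ha hb hc
  have h2 : Tendsto (fun k => Gmerit L X g h (xs k)) atTop (nhds ((L y.1 : ℝ) : EReal)) := by
    simp only [h1]
    exact EReal.tendsto_coe.mpr (((hL.comp continuous_fst).tendsto y).comp hxs)
  exact tendsto_nhds_unique hfs h2

end GmeritAux

lemma concave_tangent {η : ℝ} {φ : ℝ → ℝ}
    (hconc : ConcaveOn ℝ (Set.Ico 0 η) φ) (hdiff : DifferentiableOn ℝ φ (Set.Ioo 0 η))
    {s t : ℝ} (hs : 0 ≤ s) (hst : s ≤ t) (ht : t < η) (ht0 : 0 < t) :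
    deriv φ t * (t - s) ≤ φ t - φ s := by
  rcases eq_or_lt_of_le hst with rfl | hlt
  · simp
  · have hd : DifferentiableAt ℝ φ t :=
      (hdiff t ⟨ht0, ht⟩).differentiableAt (isOpen_Ioo.mem_nhds ⟨ht0, ht⟩)
    have hsl := hconc.deriv_le_slope (x := s) (y := t)
      ⟨hs, lt_of_le_of_lt hst ht⟩ ⟨le_trans hs hst, ht⟩ hlt hd
    rw [slope_def_field] at hsl
    have := (le_div_iff₀ (by linarith)).mp hsl
    linarith [this]

section Closed
variable {n τ : ℕ} {L : (Fin n → ℝ) → ℝ} {X : Set (Zsp n τ)} {g : Zsp n τ → ℝ}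
  {h : Fin τ → Zsp n τ → ℝ}

lemma zero_mem_limitingSubdiff (hL : Continuous L)
    {w : ℕ → Zsp n τ} {zi : Zsp n τ} {li : ℝ}
    (hw : Tendsto w atTop (nhds zi))
    (hGi : Gmerit L X g h zi = (li : EReal))
    (hGw : Tendsto (fun k => (Gmerit L X g h (w k)).toReal) atTop (nhds li))
    (v : ℕ → Zsp n τ →L[ℝ] ℝ) (hv : ∀ k, v k ∈ limitingSubdiffE (Gmerit L X g h) (w k))
    (hvn : Tendsto (fun k => ‖v k‖) atTop (nhds 0)) :
    (0 : Zsp n τ →L[ℝ] ℝ) ∈ limitingSubdiffE (Gmerit L X g h) zi := by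
  set F := Gmerit L X g h with hF
  -- for each k choose an approximating Fréchet point
  have key : ∀ k : ℕ, ∃ (x' : Zsp n τ) (v' : Zsp n τ →L[ℝ] ℝ),
      dist x' (w k) < 1 / (k + 1) ∧ dist v' (v k) < 1 / (k + 1) ∧
      v' ∈ frechetSubdiffE F x' ∧
      |(F x').toReal - (F (w k)).toReal| < 1 / (k + 1) := by
    intro k
    obtain ⟨xs, vs, hxs, hfs, hvs, hfre⟩ := hv k
    have hek : (0 : ℝ) < 1 / (k + 1) := by positivity
    have hwk : F (w k) = ((L (w k).1 : ℝ) : EReal) := Gmerit_eq_of_subdiff hL (hv k)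
    set lk : ℝ := L ((w k).1) with hlk
    have hIoo : Set.Ioo ((lk - 1 / (k+1) : ℝ) : EReal) ((lk + 1 / (k+1) : ℝ) : EReal)
        ∈ nhds (F (w k)) := by
      rw [hwk]
      exact Ioo_mem_nhds (EReal.coe_lt_coe_iff.mpr (by linarith))
        (EReal.coe_lt_coe_iff.mpr (by linarith))
    have e1 : ∀ᶠ j in atTop, F (xs j) ∈
        Set.Ioo ((lk - 1 / (k+1) : ℝ) : EReal) ((lk + 1 / (k+1) : ℝ) : EReal) :=
      hfs.eventually_mem hIoo
    have e2 : ∀ᶠ j in atTop, dist (xs j) (w k) < 1 / (k + 1) :=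
      hxs.eventually_mem (Metric.ball_mem_nhds _ hek)
    have e3 : ∀ᶠ j in atTop, dist (vs j) (v k) < 1 / (k + 1) :=
      hvs.eventually_mem (Metric.ball_mem_nhds _ hek)
    obtain ⟨j, h1, h2, h3⟩ := (e1.and (e2.and e3)).exists
    refine ⟨xs j, vs j, h2, h3, hfre j, ?_⟩
    -- F (xs j) is finite
    obtain ⟨hnt, hnb, -⟩ := hfre j
    have hco : F (xs j) = ((F (xs j)).toReal : EReal) := (EReal.coe_toReal hnt hnb).symm
    rw [hco] at h1
    rw [hwk, EReal.toReal_coe]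
    obtain ⟨ha, hb⟩ := h1
    rw [EReal.coe_lt_coe_iff] at ha hb
    rw [abs_lt]
    constructor <;> linarith
  choose xx vv hx1 hv1 hfre habs using key
  refine ⟨xx, vv, ?_, ?_, ?_, hfre⟩
  · -- xx → zi
    rw [tendsto_iff_dist_tendsto_zero]
    have hb : ∀ k, dist (xx k) zi ≤ 1 / (k + 1) + dist (w k) zi := fun k =>
      (dist_triangle _ _ _).trans (by
        have := (hx1 k).le
        gcongr)
    have hlim : Tendsto (fun k : ℕ => 1 / (k + 1 : ℝ) + dist (w k) zi) atTop (nhds 0) := by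
      have h1 := tendsto_one_div_add_atTop_nhds_zero_nat (𝕜 := ℝ)
      have h2 : Tendsto (fun k => dist (w k) zi) atTop (nhds 0) :=
        tendsto_iff_dist_tendsto_zero.mp hw
      simpa using h1.add h2
    exact squeeze_zero (fun k => dist_nonneg) hb hlim
  · -- F (xx k) → F zi
    rw [hGi]
    have hfin : ∀ k, F (xx k) = (((F (xx k)).toReal : ℝ) : EReal) := fun k =>
      (EReal.coe_toReal (hfre k).1 (hfre k).2.1).symm
    have hre : Tendsto (fun k => (F (xx k)).toReal) atTop (nhds li) := by
      rw [tendsto_iff_dist_tendsto_zero]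
      have hb : ∀ k, dist (F (xx k)).toReal li ≤ 1 / (k + 1) + dist (F (w k)).toReal li := by
        intro k
        have h1 : dist (F (xx k)).toReal (F (w k)).toReal < 1 / (k+1) := by
          rw [Real.dist_eq]; exact habs k
        calc dist (F (xx k)).toReal li
            ≤ dist (F (xx k)).toReal (F (w k)).toReal + dist (F (w k)).toReal li :=
              dist_triangle _ _ _
          _ ≤ 1 / (k + 1) + dist (F (w k)).toReal li := by linarith
      have hlim : Tendsto (fun k : ℕ => 1 / (k + 1 : ℝ) + dist (F (w k)).toReal li)
          atTop (nhds 0) := by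
        have h1 := tendsto_one_div_add_atTop_nhds_zero_nat (𝕜 := ℝ)
        have h2 : Tendsto (fun k => dist (F (w k)).toReal li) atTop (nhds 0) :=
          tendsto_iff_dist_tendsto_zero.mp hGw
        simpa using h1.add h2
      exact squeeze_zero (fun k => dist_nonneg) hb hlim
    have := EReal.tendsto_coe.mpr hre
    exact this.congr fun k => (hfin k).symm
  · -- vv → 0
    rw [tendsto_iff_dist_tendsto_zero]
    have hb : ∀ k, dist (vv k) 0 ≤ 1 / (k + 1) + ‖v k‖ := by
      intro k
      calc dist (vv k) 0 ≤ dist (vv k) (v k) + dist (v k) 0 := dist_triangle _ _ _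
        _ ≤ 1 / (k + 1) + ‖v k‖ := by
            rw [dist_zero_right]
            linarith [(hv1 k).le]
    have hlim : Tendsto (fun k : ℕ => 1 / (k + 1 : ℝ) + ‖v k‖) atTop (nhds 0) := by
      simpa using (tendsto_one_div_add_atTop_nhds_zero_nat (𝕜 := ℝ)).add hvn
    exact squeeze_zero (fun k => dist_nonneg) hb hlim

end Closed


set_option maxHeartbeats 2000000 in
set_option synthInstance.maxHeartbeats 200000 in
/-- Abstract KL convergence framework (Attouch–Bolte–Svaiter): sufficient decrease,
relative error, the KL property, and boundedness of the iterates imply that the whole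
sequence has finite length and converges to a stationary point of the merit function. -/
theorem kl_convergence_of_descent (n τ : ℕ)
    (L : (Fin n → ℝ) → ℝ) (hLcont : Continuous L)
    (X : Set (Zsp n τ)) (hX : IsClosed X)
    (g : Zsp n τ → ℝ) (hg : Continuous g)
    (h : Fin τ → Zsp n τ → ℝ) (hh : ∀ j, Continuous (h j))
    (β : ℝ) (hβ : 0 < β) (C : ℝ) (hC : 0 < C)
    (z : ℕ → Zsp n τ)
    (hdec : ∀ k, Gmerit L X g h (z (k + 1)) +
      ((β / 2 * ‖z (k + 1) - z k‖ ^ 2 : ℝ) : EReal) ≤ Gmerit L X g h (z k))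
    (herr : ∀ k, ∃ v ∈ limitingSubdiffE (Gmerit L X g h) (z (k + 1)),
      ‖v‖ ≤ C * ‖z k - z (k + 1)‖)
    (hKL : ∀ x : Zsp n τ, Gmerit L X g h x ≠ ⊤ → KLPropertyAt (Gmerit L X g h) x)
    (hbdd : ∃ M : ℝ, ∀ k, ‖z k‖ ≤ M) :
    ∃ zstar : Zsp n τ, Tendsto z atTop (nhds zstar) ∧
      (0 : Zsp n τ →L[ℝ] ℝ) ∈ limitingSubdiffE (Gmerit L X g h) zstar ∧
      Summable (fun k => ‖z (k + 1) - z k‖) := by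
  classical
  obtain ⟨M, hM⟩ := hbdd
  obtain ⟨ℓ, hℓ⟩ : ∃ ℓ : ℕ → ℝ, ∀ k, ℓ k = L ((z (k+1)).1) := ⟨_, fun _ => rfl⟩
  obtain ⟨D, hD⟩ : ∃ D : ℕ → ℝ, ∀ k, D k = ‖z (k+1+1) - z (k+1)‖ := ⟨_, fun _ => rfl⟩
  have hval : ∀ k, Gmerit L X g h (z (k+1)) = ((ℓ k : ℝ) : EReal) := by
    intro k
    obtain ⟨v, hv, -⟩ := herr k
    rw [hℓ k]
    exact Gmerit_eq_of_subdiff hLcont hv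
  have hDnn : ∀ k, 0 ≤ D k := fun k => (hD k) ▸ norm_nonneg _
  have hdecR : ∀ k, ℓ (k+1) + β/2 * D k ^2 ≤ ℓ k := by
    intro k
    have hd := hdec (k+1)
    rw [hval k, hval (k+1), ← EReal.coe_add, EReal.coe_le_coe_iff] at hd
    rw [hD k]
    exact hd
  have hanti : Antitone ℓ := antitone_nat_of_succ_le fun k => by
    have h1 : 0 ≤ β/2 * D k ^2 := by positivity
    linarith [hdecR k]
  -- bounded below
  have hmem : ∀ k, z k ∈ Metric.closedBall (0 : Zsp n τ) M := fun k =>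
    mem_closedBall_zero_iff.mpr (hM k)
  have hcpt : IsCompact (Metric.closedBall (0 : Zsp n τ) M) := isCompact_closedBall _ _
  obtain ⟨x₀, hx₀mem, hx₀min⟩ := hcpt.exists_isMinOn ⟨z 0, hmem 0⟩
    ((hLcont.comp continuous_fst).continuousOn)
  have hlow : ∀ k, L (x₀.1) ≤ ℓ k := fun k => by
    rw [hℓ k]; exact isMinOn_iff.mp hx₀min _ (hmem (k+1))
  have hbddb : BddBelow (Set.range ℓ) := ⟨L x₀.1, by rintro x ⟨k, rfl⟩; exact hlow k⟩
  obtain ⟨Gstar, htend, hGle⟩ : ∃ Gs, Tendsto ℓ atTop (nhds Gs) ∧ ∀ k, Gs ≤ ℓ k :=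
    ⟨_, tendsto_atTop_ciInf hanti hbddb, fun k => ciInf_le hbddb k⟩
  -- D tends to zero
  have hD0 : Tendsto D atTop (nhds 0) := by
    have hsq : Tendsto (fun k => D k ^ 2) atTop (nhds 0) := by
      have hub : ∀ k, D k ^2 ≤ 2/β * (ℓ k - ℓ (k+1)) := fun k => by
        have h1 := hdecR k
        rw [div_mul_eq_mul_div, le_div_iff₀ hβ]
        nlinarith
      have hlim : Tendsto (fun k => 2/β * (ℓ k - ℓ (k+1))) atTop (nhds 0) := by
        have h2 : Tendsto (fun k => ℓ (k+1)) atTop (nhds Gstar) :=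
          (tendsto_add_atTop_iff_nat 1).mpr htend
        have := (htend.sub h2).const_mul (2/β)
        simpa using this
      exact squeeze_zero (fun k => sq_nonneg _) hub hlim
    have h4 : Tendsto (fun k => Real.sqrt (D k ^ 2)) atTop (nhds 0) := by
      simpa [Function.comp_def] using (Real.continuous_sqrt.tendsto 0).comp hsq
    exact h4.congr fun k => Real.sqrt_sq (hDnn k)
  -- relative error, reindexed
  have herr2 : ∀ k, ∃ v ∈ limitingSubdiffE (Gmerit L X g h) (z (k+1+1)), ‖v‖ ≤ C * D k := by
    intro k
    obtain ⟨v, hv1, hv2⟩ := herr (k+1)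
    refine ⟨v, hv1, ?_⟩
    rw [hD k, norm_sub_rev]
    exact hv2
  -- feasibility of iterates
  have hmemS : ∀ k, z (k+1) ∈ X ∧ g (z (k+1)) ≤ 0 ∧ ∀ j, h j (z (k+1)) ≤ 0 := fun k =>
    mem_of_Gmerit_ne_top (by rw [hval k]; exact EReal.coe_ne_top _)
  -- MAIN CLAIM
  have main : ∃ zs : Zsp n τ, Tendsto (fun k => z (k+1)) atTop (nhds zs) ∧ Summable D := by
    by_cases hcase : ∀ k, Gstar < ℓ k
    · -- Case B : KL argument
      have hpos : ∀ k, 0 < ℓ k - Gstar := fun k => sub_pos.mpr (hcase k)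
      obtain ⟨c, hcpos, hcdef⟩ : ∃ c : ℝ, 0 < c ∧ β * c = 2 * C :=
        ⟨2*C/β, by positivity, by field_simp⟩
      -- cluster point
      obtain ⟨zst, -, ψ, hψ, hψtend⟩ :=
        tendsto_subseq_of_bounded Metric.isBounded_closedBall
          (fun k => hmem (k+1) : ∀ k, z (k+1) ∈ Metric.closedBall (0 : Zsp n τ) M)
      have hXz : zst ∈ X := hX.mem_of_tendsto hψtend
        (Eventually.of_forall fun j => (hmemS (ψ j)).1)
      have hgz : g zst ≤ 0 := (isClosed_le hg continuous_const).mem_of_tendsto hψtend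
        (Eventually.of_forall fun j => (hmemS (ψ j)).2.1)
      have hhz : ∀ j', h j' zst ≤ 0 := fun j' =>
        (isClosed_le (hh j') continuous_const).mem_of_tendsto hψtend
          (Eventually.of_forall fun j => (hmemS (ψ j)).2.2 j')
      have hℓψ : Tendsto (fun j => ℓ (ψ j)) atTop (nhds Gstar) := htend.comp hψ.tendsto_atTop
      have hLψ : Tendsto (fun j => ℓ (ψ j)) atTop (nhds (L zst.1)) := by
        have := ((hLcont.comp continuous_fst).tendsto zst).comp hψtend
        exact this.congr fun j => (hℓ (ψ j)).symm
      have hGstar_zst : L zst.1 = Gstar := tendsto_nhds_unique hLψ hℓψ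
      have hGzst : Gmerit L X g h zst = ((Gstar : ℝ) : EReal) := by
        rw [Gmerit_of_mem hXz hgz hhz, hGstar_zst]
      -- KL property at zst
      obtain ⟨η, hη, U, hU, φ, hφ0, hφcont, hφconc, hφdiff, hφpos, hKLineq⟩ :=
        hKL zst (by rw [hGzst]; exact EReal.coe_ne_top _)
      obtain ⟨r, hr, hrU⟩ : ∃ r > 0, Metric.closedBall zst r ⊆ U := by
        obtain ⟨ε, hε, hballU⟩ := Metric.mem_nhds_iff.mp hU
        exact ⟨ε/2, by positivity, (Metric.closedBall_subset_ball (by linarith)).trans hballU⟩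
      have hφmono : MonotoneOn φ (Set.Ico 0 η) :=
        (strictMonoOn_of_deriv_pos (convex_Ico 0 η) hφcont
          (by rw [interior_Ico]; exact hφpos)).monotoneOn
      have hφnn : ∀ t, t ∈ Set.Ico 0 η → 0 ≤ φ t := fun t ht => by
        have := hφmono (Set.left_mem_Ico.mpr hη) ht ht.1
        rwa [hφ0] at this
      -- choose k0
      have h0 : Tendsto (fun k => ℓ k - Gstar) atTop (nhds 0) := by
        simpa using htend.sub (tendsto_const_nhds (x := Gstar))
      have hev1 : ∀ᶠ k in atTop, ℓ k - Gstar < η := h0.eventually_lt_const hη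
      have hφtend : Tendsto (fun k => φ (ℓ k - Gstar)) atTop (nhds 0) := by
        have hin : ∀ᶠ k in atTop, (ℓ k - Gstar) ∈ Set.Ico 0 η :=
          hev1.mono fun k hk => ⟨(hpos k).le, hk⟩
        have hcw : ContinuousWithinAt φ (Set.Ico 0 η) 0 := hφcont 0 (Set.left_mem_Ico.mpr hη)
        have h0' : Tendsto (fun k => ℓ k - Gstar) atTop (nhdsWithin 0 (Set.Ico 0 η)) :=
          tendsto_nhdsWithin_iff.mpr ⟨h0, hin⟩
        have hcw' : Tendsto φ (nhdsWithin 0 (Set.Ico 0 η)) (nhds (φ 0)) := hcw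
        have := hcw'.comp h0'
        rwa [hφ0] at this
      have h2cb : (0:ℝ) < c := hcpos
      have hev : ∀ᶠ k in atTop,
          (ℓ k - Gstar < η ∧ 2 * D k ≤ r/4) ∧ c * φ (ℓ k - Gstar) ≤ r/4 := by
        have e2 : ∀ᶠ k in atTop, 2 * D k ≤ r/4 :=
          (hD0.eventually_lt_const (show (0:ℝ) < r/8 by positivity)).mono fun k hk => by
            linarith
        have e3 : ∀ᶠ k in atTop, c * φ (ℓ k - Gstar) ≤ r/4 := by
          have := hφtend.eventually_lt_const (show (0:ℝ) < (r/4) / (c) by positivity)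
          refine this.mono fun k hk => ?_
          have := mul_lt_mul_of_pos_left hk h2cb
          rw [mul_div_cancel₀ _ (ne_of_gt h2cb)] at this
          linarith
        exact (hev1.and e2).and e3
      obtain ⟨N, hN⟩ := eventually_atTop.mp hev
      have hevj : ∀ᶠ j in atTop, ((fun k => z (k+1)) ∘ ψ) j ∈ Metric.closedBall zst (r/4) :=
        hψtend.eventually_mem (Metric.closedBall_mem_nhds _ (by positivity))
      have hevN : ∀ᶠ j in atTop, N ≤ ψ j :=
        eventually_atTop.mpr ⟨N, fun j hj => le_trans hj hψ.le_apply⟩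
      obtain ⟨j0, hj0dist, hj0N⟩ := (hevj.and hevN).exists
      obtain ⟨k0, hk0N, hk0b⟩ : ∃ k0, N ≤ k0 ∧ dist (z (k0+1)) zst ≤ r/4 :=
        ⟨ψ j0, hj0N, Metric.mem_closedBall.mp hj0dist⟩
      have hk0a : ℓ k0 - Gstar < η := (hN k0 hk0N).1.1
      have hk0c : 2 * D k0 ≤ r/4 := (hN k0 hk0N).1.2
      have hk0d : c * φ (ℓ k0 - Gstar) ≤ r/4 := (hN k0 hk0N).2
      have hrange : ∀ k, k0 ≤ k → (ℓ k - Gstar) ∈ Set.Ico 0 η := fun k hk =>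
        ⟨(hpos k).le, lt_of_le_of_lt (by linarith [hanti hk]) hk0a⟩
      -- accumulated distance bound
      have hA : ∀ m, k0 ≤ m →
          ‖z (m+1) - zst‖ ≤ ‖z (k0+1) - zst‖ + ∑ j ∈ Finset.Ico k0 m, D j := by
        intro m hm
        induction m, hm using Nat.le_induction with
        | base => simp
        | succ m hm IH =>
          have h1 : ‖z (m+1+1) - zst‖ ≤ ‖z (m+1+1) - z (m+1)‖ + ‖z (m+1) - zst‖ := by
            calc ‖z (m+1+1) - zst‖ = ‖(z (m+1+1) - z (m+1)) + (z (m+1) - zst)‖ := by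
                  rw [sub_add_sub_cancel]
              _ ≤ _ := norm_add_le _ _
          rw [Finset.sum_Ico_succ_top hm]
          have h2 := hD m
          linarith [IH]
      -- KL one-step estimate
      have hstep : ∀ m, k0 ≤ m → z (m+1+1) ∈ U →
          2 * D (m+1) ≤ D m + c * (φ (ℓ (m+1) - Gstar) - φ (ℓ (m+1+1) - Gstar)) := by
        intro m hm hmU
        obtain ⟨v, hv, hvb⟩ := herr2 m
        have htpos : 0 < ℓ (m+1) - Gstar := hpos (m+1)
        have htlt : ℓ (m+1) - Gstar < η := (hrange (m+1) (by omega)).2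
        have hy1 : Gmerit L X g h zst < Gmerit L X g h (z (m+1+1)) := by
          rw [hGzst, hval (m+1)]
          exact EReal.coe_lt_coe_iff.mpr (by linarith)
        have hy2 : Gmerit L X g h (z (m+1+1)) < Gmerit L X g h zst + (η : EReal) := by
          rw [hGzst, hval (m+1), ← EReal.coe_add]
          exact EReal.coe_lt_coe_iff.mpr (by linarith)
        have hKL1 := hKLineq (z (m+1+1)) hmU hy1 hy2 v hv
        have htR : (Gmerit L X g h (z (m+1+1)) - Gmerit L X g h zst).toReal
            = ℓ (m+1) - Gstar := by
          rw [hval (m+1), hGzst, ← EReal.coe_sub, EReal.toReal_coe]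
        rw [htR] at hKL1
        have hdpos : 0 < deriv φ (ℓ (m+1) - Gstar) := hφpos _ ⟨htpos, htlt⟩
        have h1 : 1 ≤ deriv φ (ℓ (m+1) - Gstar) * (C * D m) :=
          le_trans hKL1 (mul_le_mul_of_nonneg_left hvb hdpos.le)
        have hDm : 0 < D m := by
          rcases (hDnn m).lt_or_eq with h' | h'
          · exact h'
          · exfalso
            have hcontra : (1:ℝ) ≤ 0 := by simpa [← h'] using h1
            linarith
        have hspos : 0 ≤ ℓ (m+1+1) - Gstar := (hpos (m+1+1)).le
        have hsle : ℓ (m+1+1) - Gstar ≤ ℓ (m+1) - Gstar := by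
          have := hanti (Nat.le_succ (m+1)); linarith
        have htan := concave_tangent hφconc hφdiff hspos hsle htlt htpos
        have hts : β/2 * D (m+1)^2 ≤ (ℓ (m+1) - Gstar) - (ℓ (m+1+1) - Gstar) := by
          have := hdecR (m+1); linarith
        have hΔnn : 0 ≤ φ (ℓ (m+1) - Gstar) - φ (ℓ (m+1+1) - Gstar) := by
          have := hφmono (hrange (m+1+1) (by omega)) (hrange (m+1) (by omega)) hsle
          linarith
        have hcomb : β/2 * D (m+1)^2
            ≤ C * D m * (φ (ℓ (m+1) - Gstar) - φ (ℓ (m+1+1) - Gstar)) := by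
          have h2 : deriv φ (ℓ (m+1) - Gstar) * (β/2 * D (m+1)^2)
              ≤ φ (ℓ (m+1) - Gstar) - φ (ℓ (m+1+1) - Gstar) :=
            le_trans (mul_le_mul_of_nonneg_left hts hdpos.le) htan
          nlinarith [mul_le_mul_of_nonneg_left h2 (show (0:ℝ) ≤ C * D m by positivity),
            mul_le_mul_of_nonneg_right h1 (show (0:ℝ) ≤ β/2 * D (m+1)^2 by positivity)]
        have hbnn : 0 ≤ c * (φ (ℓ (m+1) - Gstar) - φ (ℓ (m+1+1) - Gstar)) :=
          mul_nonneg h2cb.le hΔnn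
        have hd2 : D (m+1)^2 ≤ D m * (c * (φ (ℓ (m+1) - Gstar) - φ (ℓ (m+1+1) - Gstar))) := by
          have h3 : β * D (m+1)^2
              ≤ β * (D m * (c * (φ (ℓ (m+1) - Gstar) - φ (ℓ (m+1+1) - Gstar)))) := by
            rw [show β * (D m * (c * (φ (ℓ (m+1) - Gstar) - φ (ℓ (m+1+1) - Gstar))))
                = (β * c) * (D m * (φ (ℓ (m+1) - Gstar) - φ (ℓ (m+1+1) - Gstar))) from by ring,
              hcdef]
            nlinarith [hcomb]
          exact le_of_mul_le_mul_left h3 hβ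
        have hplus : (0:ℝ) ≤ 2 * D (m+1) + (D m
            + c * (φ (ℓ (m+1) - Gstar) - φ (ℓ (m+1+1) - Gstar))) := by
          have := hDnn (m+1); have := hDnn m; linarith
        nlinarith [hd2, sq_nonneg (D m - c * (φ (ℓ (m+1) - Gstar) - φ (ℓ (m+1+1) - Gstar))),
          hplus, hDnn (m+1), hDnn m, hbnn]
      -- the invariant, by induction
      have hinv : ∀ i : ℕ, (∑ j ∈ Finset.Ico k0 (k0 + i + 1), D j) + D (k0 + i)
          ≤ 2 * D k0 + c * (φ (ℓ (k0+1) - Gstar) - φ (ℓ (k0 + i + 1) - Gstar)) := by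
        intro i
        induction i with
        | zero =>
          simp only [Nat.add_zero, Nat.Ico_succ_singleton, Finset.sum_singleton, sub_self,
            mul_zero]
          linarith
        | succ i IH =>
          have hxle : k0 ≤ k0 + i := Nat.le_add_right _ _
          have hsum_le : (∑ j ∈ Finset.Ico k0 (k0+i+1), D j)
              ≤ 2*D k0 + c * φ (ℓ (k0+1) - Gstar) := by
            have hφnn2 : 0 ≤ φ (ℓ (k0+i+1) - Gstar) := hφnn _ (hrange _ (by omega))
            have hb2 : 0 ≤ c * φ (ℓ (k0+i+1) - Gstar) := mul_nonneg h2cb.le hφnn2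
            have hDn := hDnn (k0+i)
            nlinarith [IH]
          have hUmem : z (k0+i+1+1) ∈ U := by
            apply hrU
            rw [Metric.mem_closedBall, dist_eq_norm]
            have h5 := hA (k0+i+1) (by omega)
            have hφle : φ (ℓ (k0+1) - Gstar) ≤ φ (ℓ k0 - Gstar) := by
              refine hφmono (hrange (k0+1) (by omega)) (hrange k0 le_rfl) ?_
              have := hanti (Nat.le_succ k0); linarith
            have h6 : ‖z (k0+1) - zst‖ ≤ r/4 := by
              rw [← dist_eq_norm]; exact hk0b
            have h7 := mul_le_mul_of_nonneg_left hφle h2cb.le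
            nlinarith [h5, hsum_le]
          have hst := hstep (k0+i) hxle hUmem
          have hsplit : ∑ j ∈ Finset.Ico k0 (k0+i+1+1), D j
              = (∑ j ∈ Finset.Ico k0 (k0+i+1), D j) + D (k0+i+1) :=
            Finset.sum_Ico_succ_top (by omega) _
          have hgoal : (∑ j ∈ Finset.Ico k0 (k0 + (i+1) + 1), D j) + D (k0 + (i+1))
              ≤ 2 * D k0 + c * (φ (ℓ (k0+1) - Gstar) - φ (ℓ (k0 + (i+1) + 1) - Gstar)) := by
            have hidx : k0 + (i+1) = k0 + i + 1 := by omega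
            rw [hidx, hsplit]
            nlinarith [IH, hst]
          exact hgoal
      -- summability of D
      have hφnn1 : 0 ≤ φ (ℓ (k0+1) - Gstar) := hφnn _ (hrange _ (by omega))
      have hDsum : Summable D := by
        apply summable_of_sum_range_le (c := (∑ j ∈ Finset.range k0, D j)
          + (2*D k0 + c * φ (ℓ (k0+1) - Gstar))) hDnn
        intro nn
        rcases le_or_gt nn k0 with hn | hn
        · have h1 : ∑ j ∈ Finset.range nn, D j ≤ ∑ j ∈ Finset.range k0, D j :=
            Finset.sum_le_sum_of_subset_of_nonneg (Finset.range_subset_range.mpr hn)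
              (fun i _ _ => hDnn i)
          have h2 : 0 ≤ 2*D k0 + c * φ (ℓ (k0+1) - Gstar) := by
            have := hDnn k0
            nlinarith [mul_nonneg h2cb.le hφnn1]
          linarith
        · obtain ⟨i, rfl⟩ : ∃ i, nn = k0 + i + 1 := ⟨nn - k0 - 1, by omega⟩
          have hsplit : (∑ j ∈ Finset.range k0, D j) + ∑ j ∈ Finset.Ico k0 (k0+i+1), D j
              = ∑ j ∈ Finset.range (k0+i+1), D j := by
            simp only [Finset.range_eq_Ico]
            exact Finset.sum_Ico_consecutive _ (by omega) (by omega)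
          have h2 := hinv i
          have hφnn2 : 0 ≤ φ (ℓ (k0+i+1) - Gstar) := hφnn _ (hrange _ (by omega))
          have h3 : 0 ≤ c * φ (ℓ (k0+i+1) - Gstar) := mul_nonneg h2cb.le hφnn2
          have h4 := hDnn (k0+i)
          nlinarith [h2]
      -- Cauchy, hence convergent
      have hcauchy : CauchySeq (fun k => z (k+1)) :=
        cauchySeq_of_dist_le_of_summable D
          (fun k => le_of_eq (by rw [dist_eq_norm, norm_sub_rev, hD k])) hDsum
      obtain ⟨zs, hzs⟩ := cauchySeq_tendsto_of_complete hcauchy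
      exact ⟨zs, hzs, hDsum⟩
    · -- Case A : the value stabilizes
      push_neg at hcase
      obtain ⟨k0, hk0⟩ := hcase
      have hconst : ∀ k, k0 ≤ k → ℓ k = ℓ k0 := fun k hk =>
        le_antisymm (hanti hk) (hk0.trans (hGle k))
      have hDzero : ∀ k, k0 ≤ k → D k = 0 := by
        intro k hk
        have h1 : ℓ k = ℓ k0 := hconst k hk
        have h2 : ℓ (k+1) = ℓ k0 := hconst (k+1) (by omega)
        have h3 := hdecR k
        have h4 : D k ^ 2 ≤ 0 := by nlinarith
        have h5 : D k ^ 2 = 0 := le_antisymm h4 (sq_nonneg _)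
        exact pow_eq_zero_iff two_ne_zero |>.mp h5
      have hwconst : ∀ k, k0 ≤ k → z (k+1) = z (k0+1) := by
        intro k hk
        induction k, hk using Nat.le_induction with
        | base => rfl
        | succ m hm IH =>
          have h1 : D m = 0 := hDzero m hm
          rw [hD m] at h1
          have h2 : z (m+1+1) = z (m+1) := by
            have := norm_eq_zero.mp h1
            have := sub_eq_zero.mp this
            exact this
          rw [h2, IH]
      refine ⟨z (k0+1), tendsto_atTop_of_eventually_const hwconst, ?_⟩
      apply summable_of_ne_finset_zero (s := Finset.range (k0+1))
      intro k hk
      refine hDzero k ?_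
      simp only [Finset.mem_range, Nat.lt_succ_iff, not_le] at hk
      omega
  -- POSTPROCESSING
  obtain ⟨zs, hzs, hsumD⟩ := main
  have hXzs : zs ∈ X := hX.mem_of_tendsto hzs (Eventually.of_forall fun k => (hmemS k).1)
  have hgzs : g zs ≤ 0 := (isClosed_le hg continuous_const).mem_of_tendsto hzs
    (Eventually.of_forall fun k => (hmemS k).2.1)
  have hhzs : ∀ j, h j zs ≤ 0 := fun j =>
    (isClosed_le (hh j) continuous_const).mem_of_tendsto hzs
      (Eventually.of_forall fun k => (hmemS k).2.2 j)
  have hGzs : Gmerit L X g h zs = ((L zs.1 : ℝ) : EReal) := Gmerit_of_mem hXzs hgzs hhzs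
  have hLzs : Tendsto ℓ atTop (nhds (L zs.1)) := by
    have := ((hLcont.comp continuous_fst).tendsto zs).comp hzs
    exact this.congr fun k => (hℓ k).symm
  have hGstar_eq : L zs.1 = Gstar := tendsto_nhds_unique hLzs htend
  have hGzs' : Gmerit L X g h zs = ((Gstar : ℝ) : EReal) := by rw [hGzs, hGstar_eq]
  choose vv hvv hvnorm using herr2
  have hznext : Tendsto (fun k => z (k+1+1)) atTop (nhds zs) :=
    (tendsto_add_atTop_iff_nat 1).mpr hzs
  have hGnext : Tendsto (fun k => (Gmerit L X g h (z (k+1+1))).toReal) atTop (nhds Gstar) := by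
    have h1 : Tendsto (fun k => ℓ (k+1)) atTop (nhds Gstar) :=
      (tendsto_add_atTop_iff_nat 1).mpr htend
    exact h1.congr fun k => by rw [hval (k+1), EReal.toReal_coe]
  have hD0' : Tendsto D atTop (nhds 0) := by
    have hsum0 := hsumD.tendsto_atTop_zero
    exact hsum0
  have hvn0 : Tendsto (fun k => ‖vv k‖) atTop (nhds 0) :=
    squeeze_zero (fun k => norm_nonneg _) hvnorm (by simpa using hD0'.const_mul C)
  have h0mem := zero_mem_limitingSubdiff hLcont hznext hGzs' hGnext vv hvv hvn0
  refine ⟨zs, (tendsto_add_atTop_iff_nat 1).mp hzs, h0mem, ?_⟩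
  exact (summable_nat_add_iff (f := fun k => ‖z (k + 1) - z k‖) 1).mp
    (hsumD.congr fun k => hD k)
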